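/- For every word σ ∈ {1,2,3}^k (k ≥ 0) and every x₀ ∈ ℝ, one has ∫_{J_σ} (x − x₀)² dP(x) = 3^{−k} ( 25^{−k} · (1/9) + (S_σ(1/2) − x₀)² ). -/

import Mathlib

open MeasureTheory Filter
open scoped ENNReal

noncomputable section

/-- The three contractive similarities `S j x = x/5 + 2 j/5` (indexing `j = 0,1,2`
corresponds to the paper's `j = 1,2,3`). -/
def S (j : Fin 3) : ℝ → ℝ := fun x => x / 5 + 2 * (j : ℝ) / 5

/-- For a word `σ ∈ {1,2,3}^k`, the composition `S_σ = S_{σ 0} ∘ ⋯ ∘ S_{σ (k-1)}`. -/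
def Sword {k : ℕ} (σ : Fin k → Fin 3) : ℝ → ℝ :=
  (List.ofFn fun i => S (σ i)).foldr (· ∘ ·) id

/-- The basic interval `J j = S j ([0,1])`. -/
def J (j : Fin 3) : Set ℝ := S j '' Set.Icc 0 1

/-- The interval `J_σ = S_σ([0,1])`. -/
def Jword {k : ℕ} (σ : Fin k → Fin 3) : Set ℝ := Sword σ '' Set.Icc 0 1

/-- The distortion error `V(P; α) = ∫ min_{a ∈ α} (x - a)^2 dP(x)`. -/
def distortion (P : Measure ℝ) (α : Set ℝ) : ℝ :=
  ∫ x, (⨅ a : α, (x - (a : ℝ)) ^ 2) ∂P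

/-- The `n`-th quantization error
`V_n = inf { V(P; α) : α ⊂ ℝ finite, 1 ≤ card α ≤ n }`. -/
def quantErr (P : Measure ℝ) (n : ℕ) : ℝ :=
  sInf {e | ∃ α : Set ℝ, α.Finite ∧ α.Nonempty ∧ α.ncard ≤ n ∧ distortion P α = e}

/-- The self-similarity equation `P = (1/3)(P∘S₁⁻¹ + P∘S₂⁻¹ + P∘S₃⁻¹)`
characterizing the standard triadic Cantor distribution. -/
def IsTriadicCantor (P : Measure ℝ) : Prop :=
  P = (3 : ℝ≥0∞)⁻¹ • (P.map (S 0) + P.map (S 1) + P.map (S 2))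

-- basic facts
lemma measurable_S (j : Fin 3) : Measurable (S j) := by unfold S; fun_prop

lemma continuous_S (j : Fin 3) : Continuous (S j) := by unfold S; fun_prop

lemma S_mapsTo (j : Fin 3) : Set.MapsTo (S j) (Set.Icc 0 1) (Set.Icc 0 1) := by
  intro x hx
  have hj : ((j : ℕ) : ℝ) ≤ 2 := by exact_mod_cast j.is_le
  have hj0 : (0:ℝ) ≤ ((j : ℕ) : ℝ) := by positivity
  obtain ⟨h0, h1⟩ := hx
  constructor <;> simp only [S] <;> nlinarith

lemma Sword_zero (σ : Fin 0 → Fin 3) : Sword σ = id := rfl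

lemma Sword_succ {k : ℕ} (σ : Fin (k+1) → Fin 3) :
    Sword σ = S (σ 0) ∘ Sword (fun i => σ i.succ) := by
  unfold Sword
  rw [List.ofFn_succ]
  rfl

lemma continuous_Sword {k : ℕ} (σ : Fin k → Fin 3) : Continuous (Sword σ) := by
  induction k with
  | zero => rw [Sword_zero]; exact continuous_id
  | succ k ih => rw [Sword_succ]; exact (continuous_S _).comp (ih _)

lemma Sword_mapsTo {k : ℕ} (σ : Fin k → Fin 3) :
    Set.MapsTo (Sword σ) (Set.Icc 0 1) (Set.Icc 0 1) := by
  induction k with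
  | zero => rw [Sword_zero]; exact Set.mapsTo_id _
  | succ k ih => rw [Sword_succ]; exact (S_mapsTo _).comp (ih _)

lemma Jword_subset {k : ℕ} (σ : Fin k → Fin 3) : Jword σ ⊆ Set.Icc 0 1 :=
  (Sword_mapsTo σ).image_subset

lemma measurableSet_Jword {k : ℕ} (σ : Fin k → Fin 3) : MeasurableSet (Jword σ) :=
  (isCompact_Icc.image (continuous_Sword σ)).measurableSet

-- null sets outside [0,1]
lemma P_apply_eq (P : Measure ℝ) (hP : IsTriadicCantor P) {A : Set ℝ} (hA : MeasurableSet A) :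
    P A = 3⁻¹ * (P (S 0 ⁻¹' A) + P (S 1 ⁻¹' A) + P (S 2 ⁻¹' A)) := by
  have hP' : P = (3 : ℝ≥0∞)⁻¹ • (P.map (S 0) + P.map (S 1) + P.map (S 2)) := hP
  conv_lhs => rw [hP']
  simp only [Measure.smul_apply, Measure.coe_add, Pi.add_apply, smul_eq_mul,
    Measure.map_apply (measurable_S _) hA]

lemma S_preimage_Iio (j : Fin 3) (a : ℝ) :
    S j ⁻¹' Set.Iio a = Set.Iio (5*a - 2*((j:ℕ):ℝ)) := by
  ext x
  simp only [S, Set.mem_preimage, Set.mem_Iio]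
  constructor <;> intro h <;> linarith

lemma S_preimage_Ioi (j : Fin 3) (a : ℝ) :
    S j ⁻¹' Set.Ioi a = Set.Ioi (5*a - 2*((j:ℕ):ℝ)) := by
  ext x
  simp only [S, Set.mem_preimage, Set.mem_Ioi]
  constructor <;> intro h <;> linarith

lemma avg_le {w a b c : ℝ≥0∞}
    (heq : w = 3⁻¹ * (b + c + a)) (hb : b ≤ w) (hc : c ≤ w)
    (hwt : w ≠ ∞) (hat : a ≠ ∞) (hbt : b ≠ ∞) (hct : c ≠ ∞) : w ≤ a := by
  rw [← ENNReal.toReal_le_toReal hwt hat]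
  have h1 := congrArg ENNReal.toReal heq
  rw [ENNReal.toReal_mul, ENNReal.toReal_add (ENNReal.add_ne_top.mpr ⟨hbt, hct⟩) hat,
    ENNReal.toReal_add hbt hct] at h1
  have h2 : (3⁻¹ : ℝ≥0∞).toReal = 1/3 := by
    rw [ENNReal.toReal_inv]; norm_num
  have hb' := (ENNReal.toReal_le_toReal hbt hwt).mpr hb
  have hc' := (ENNReal.toReal_le_toReal hct hwt).mpr hc
  rw [h2] at h1
  linarith

lemma step_Iio (P : Measure ℝ) [IsProbabilityMeasure P] (hP : IsTriadicCantor P)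
    {t : ℝ} (ht : 0 ≤ t) : P (Set.Iio (-t)) ≤ P (Set.Iio (-(5*t+4))) := by
  have heq := P_apply_eq P hP (measurableSet_Iio (a := -t))
  rw [S_preimage_Iio, S_preimage_Iio, S_preimage_Iio] at heq
  have v0 : ((0:Fin 3):ℕ) = 0 := rfl
  have v1 : ((1:Fin 3):ℕ) = 1 := rfl
  have v2 : ((2:Fin 3):ℕ) = 2 := rfl
  have e0 : 5*(-t) - 2*(((0:Fin 3):ℕ):ℝ) = -(5*t) := by rw [v0]; push_cast; ring
  have e1 : 5*(-t) - 2*(((1:Fin 3):ℕ):ℝ) = -(5*t+2) := by rw [v1]; push_cast; ring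
  have e2 : 5*(-t) - 2*(((2:Fin 3):ℕ):ℝ) = -(5*t+4) := by rw [v2]; push_cast; ring
  rw [e0, e1, e2] at heq
  refine avg_le heq ?_ ?_ (measure_ne_top P _) (measure_ne_top P _)
    (measure_ne_top P _) (measure_ne_top P _)
  · exact measure_mono (Set.Iio_subset_Iio (by linarith))
  · exact measure_mono (Set.Iio_subset_Iio (by linarith))

lemma step_Ioi (P : Measure ℝ) [IsProbabilityMeasure P] (hP : IsTriadicCantor P)
    {t : ℝ} (ht : 1 ≤ t) : P (Set.Ioi t) ≤ P (Set.Ioi (5*t)) := by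
  have heq := P_apply_eq P hP (measurableSet_Ioi (a := t))
  rw [S_preimage_Ioi, S_preimage_Ioi, S_preimage_Ioi] at heq
  have e0 : 5*t - 2*(((0:Fin 3):ℕ):ℝ) = 5*t := by
    rw [show ((0:Fin 3):ℕ) = 0 from rfl]; push_cast; ring
  rw [e0] at heq
  have heq' : P (Set.Ioi t) = 3⁻¹ *
      (P (Set.Ioi (5*t - 2*(((1:Fin 3):ℕ):ℝ))) + P (Set.Ioi (5*t - 2*(((2:Fin 3):ℕ):ℝ)))
        + P (Set.Ioi (5*t))) := by
    rw [heq]; ring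
  refine avg_le heq' ?_ ?_ (measure_ne_top P _) (measure_ne_top P _)
    (measure_ne_top P _) (measure_ne_top P _)
  · refine measure_mono (Set.Ioi_subset_Ioi ?_)
    have : (((1:Fin 3):ℕ):ℝ) = 1 := by rw [show ((1:Fin 3):ℕ) = 1 from rfl]; norm_num
    rw [this]; linarith
  · refine measure_mono (Set.Ioi_subset_Ioi ?_)
    have : (((2:Fin 3):ℕ):ℝ) = 2 := by rw [show ((2:Fin 3):ℕ) = 2 from rfl]; norm_num
    rw [this]; linarith

lemma P_Iio_zero (P : Measure ℝ) [IsProbabilityMeasure P] (hP : IsTriadicCantor P) :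
    P (Set.Iio (0:ℝ)) = 0 := by
  have hstep : ∀ n : ℕ, P (Set.Iio (0:ℝ)) ≤ P (Set.Iio (-((5:ℝ)^n - 1))) := by
    intro n
    induction n with
    | zero => simp
    | succ n ih =>
      refine ih.trans ?_
      have h5 : (1:ℝ) ≤ (5:ℝ)^n := one_le_pow₀ (by norm_num)
      have := step_Iio P hP (t := (5:ℝ)^n - 1) (by linarith)
      have harith : -(5*((5:ℝ)^n - 1)+4) = -((5:ℝ)^(n+1) - 1) := by ring
      rwa [harith] at this
  have hmono : Antitone (fun n : ℕ => Set.Iio (-((5:ℝ)^n - 1))) := by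
    intro m n hmn
    refine Set.Iio_subset_Iio ?_
    have : (5:ℝ)^m ≤ (5:ℝ)^n := pow_le_pow_right₀ (by norm_num) hmn
    linarith
  have hempty : ⋂ n, Set.Iio (-((5:ℝ)^n - 1)) = ∅ := by
    ext x
    simp only [Set.mem_iInter, Set.mem_Iio, Set.mem_empty_iff_false, iff_false, not_forall, not_lt]
    obtain ⟨n, hn⟩ := exists_nat_gt (-x)
    refine ⟨n, ?_⟩
    have h1 : (n:ℝ) + 1 ≤ (5:ℝ)^n := by
      exact_mod_cast Nat.succ_le_of_lt (Nat.lt_pow_self (n := n) (a := 5) (by norm_num))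
    linarith
  have htend := tendsto_measure_iInter_atTop (μ := P)
    (fun n => measurableSet_Iio.nullMeasurableSet) hmono ⟨0, measure_ne_top P _⟩
  rw [hempty, measure_empty] at htend
  have := ge_of_tendsto htend (Eventually.of_forall hstep)
  exact le_antisymm this (zero_le)

lemma P_Ioi_one (P : Measure ℝ) [IsProbabilityMeasure P] (hP : IsTriadicCantor P) :
    P (Set.Ioi (1:ℝ)) = 0 := by
  have hstep : ∀ n : ℕ, P (Set.Ioi (1:ℝ)) ≤ P (Set.Ioi ((5:ℝ)^n)) := by
    intro n
    induction n with
    | zero => simp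
    | succ n ih =>
      refine ih.trans ?_
      have h5 : (1:ℝ) ≤ (5:ℝ)^n := one_le_pow₀ (by norm_num)
      have := step_Ioi P hP (t := (5:ℝ)^n) h5
      have harith : 5*(5:ℝ)^n = (5:ℝ)^(n+1) := by ring
      rwa [harith] at this
  have hmono : Antitone (fun n : ℕ => Set.Ioi ((5:ℝ)^n)) := by
    intro m n hmn
    exact Set.Ioi_subset_Ioi (pow_le_pow_right₀ (by norm_num) hmn)
  have hempty : ⋂ n, Set.Ioi ((5:ℝ)^n) = ∅ := by
    ext x
    simp only [Set.mem_iInter, Set.mem_Ioi, Set.mem_empty_iff_false, iff_false, not_forall, not_lt]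
    obtain ⟨n, hn⟩ := exists_nat_gt x
    refine ⟨n, ?_⟩
    have h1 : (n:ℝ) < (5:ℝ)^n := by exact_mod_cast Nat.lt_pow_self (n := n) (a := 5) (by norm_num)
    linarith
  have htend := tendsto_measure_iInter_atTop (μ := P)
    (fun n => measurableSet_Ioi.nullMeasurableSet) hmono ⟨0, measure_ne_top P _⟩
  rw [hempty, measure_empty] at htend
  have := ge_of_tendsto htend (Eventually.of_forall hstep)
  exact le_antisymm this (zero_le)

lemma ae_Icc (P : Measure ℝ) [IsProbabilityMeasure P] (hP : IsTriadicCantor P) :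
    ∀ᵐ x ∂P, x ∈ Set.Icc (0:ℝ) 1 := by
  have h1 : P (Set.Iio (0:ℝ) ∪ Set.Ioi 1) = 0 :=
    le_antisymm ((measure_union_le _ _).trans
      (by rw [P_Iio_zero P hP, P_Ioi_one P hP]; simp)) (zero_le)
  rw [ae_iff]
  convert h1 using 2
  ext x
  simp only [Set.mem_Icc, Set.mem_setOf_eq, Set.mem_union, Set.mem_Iio, Set.mem_Ioi]
  constructor
  · intro h; by_contra hc; push_neg at hc; exact h ⟨hc.1, hc.2⟩
  · rintro (h | h) ⟨h0, h1'⟩ <;> linarith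

-- integrability of a.e. bounded functions
lemma integrable_bdd (P : Measure ℝ) [IsProbabilityMeasure P] (hP : IsTriadicCantor P)
    (f : ℝ → ℝ) (hf : Measurable f) (C : ℝ) (hb : ∀ x ∈ Set.Icc (0:ℝ) 1, |f x| ≤ C) :
    Integrable f P := by
  refine ⟨hf.aestronglyMeasurable, HasFiniteIntegral.of_bounded (C := C) ?_⟩
  exact (ae_Icc P hP).mono fun x hx => by simpa [Real.norm_eq_abs] using hb x hx

-- the key change-of-variables identity
lemma key_int (P : Measure ℝ) [IsProbabilityMeasure P] (hP : IsTriadicCantor P)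
    (f : ℝ → ℝ) (hf : Measurable f) (C : ℝ) (hb : ∀ x ∈ Set.Icc (0:ℝ) 1, |f x| ≤ C) :
    ∫ x, f x ∂P = (1/3) * ((∫ x, f (S 0 x) ∂P) + (∫ x, f (S 1 x) ∂P) + (∫ x, f (S 2 x) ∂P)) := by
  have hP' : P = (3 : ℝ≥0∞)⁻¹ • (P.map (S 0) + P.map (S 1) + P.map (S 2)) := hP
  have hint : ∀ j : Fin 3, Integrable (fun x => f (S j x)) P := by
    intro j
    refine integrable_bdd P hP _ (hf.comp (measurable_S j)) C fun x hx => hb _ (S_mapsTo j hx)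
  have hmap : ∀ j : Fin 3, Integrable f (P.map (S j)) := by
    intro j
    exact (integrable_map_measure hf.aestronglyMeasurable
      (measurable_S j).aemeasurable).mpr (hint j)
  conv_lhs => rw [hP']
  rw [integral_smul_measure, integral_add_measure ((hmap 0).add_measure (hmap 1)) (hmap 2),
    integral_add_measure (hmap 0) (hmap 1),
    integral_map (measurable_S 0).aemeasurable hf.aestronglyMeasurable,
    integral_map (measurable_S 1).aemeasurable hf.aestronglyMeasurable,
    integral_map (measurable_S 2).aemeasurable hf.aestronglyMeasurable]
  rw [smul_eq_mul]
  norm_num [ENNReal.toReal_inv]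

lemma integrable_x (P : Measure ℝ) [IsProbabilityMeasure P] (hP : IsTriadicCantor P) :
    Integrable (fun x : ℝ => x) P :=
  integrable_bdd P hP _ measurable_id 1 fun x hx => abs_le.mpr ⟨by linarith [hx.1], hx.2⟩

lemma integrable_xsq (P : Measure ℝ) [IsProbabilityMeasure P] (hP : IsTriadicCantor P) :
    Integrable (fun x : ℝ => x^2) P := by
  refine integrable_bdd P hP _ (measurable_id.pow_const 2) 1 fun x hx => ?_
  rw [abs_of_nonneg (sq_nonneg x)]
  nlinarith [hx.1, hx.2]

lemma moment_one (P : Measure ℝ) [IsProbabilityMeasure P] (hP : IsTriadicCantor P) :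
    ∫ x, x ∂P = 1/2 := by
  have haff : ∀ c : ℝ, ∫ x, (x/5 + c) ∂P = (∫ x, x ∂P)/5 + c := by
    intro c
    rw [integral_add ((integrable_x P hP).div_const 5) (integrable_const c),
      integral_div, integral_const]
    simp
  have h := key_int P hP (fun x => x) measurable_id 1
    (fun x hx => abs_le.mpr ⟨by linarith [hx.1], hx.2⟩)
  simp only [S] at h
  rw [haff, haff, haff] at h
  have v0 : (((0:Fin 3):ℕ):ℝ) = 0 := by norm_num [show ((0:Fin 3):ℕ) = 0 from rfl]
  have v1 : (((1:Fin 3):ℕ):ℝ) = 1 := by norm_num [show ((1:Fin 3):ℕ) = 1 from rfl]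
  have v2 : (((2:Fin 3):ℕ):ℝ) = 2 := by norm_num [show ((2:Fin 3):ℕ) = 2 from rfl]
  rw [v0, v1, v2] at h
  linarith

lemma moment_two (P : Measure ℝ) [IsProbabilityMeasure P] (hP : IsTriadicCantor P) :
    ∫ x, x^2 ∂P = 13/36 := by
  have haff : ∀ c : ℝ, ∫ x, (x/5 + c)^2 ∂P
      = (∫ x, x^2 ∂P)/25 + (2*c/5) * (∫ x, x ∂P) + c^2 := by
    intro c
    have hfun : (fun x : ℝ => (x/5 + c)^2)
        = fun x => ((1/25) * x^2 + (2*c/5) * x) + c^2 := by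
      funext x; ring
    have h1 : Integrable (fun x : ℝ => (1/25) * x^2) P := (integrable_xsq P hP).const_mul _
    have h2 : Integrable (fun x : ℝ => (2*c/5) * x) P := (integrable_x P hP).const_mul _
    have h12 : Integrable (fun x : ℝ => (1/25) * x^2 + (2*c/5) * x) P := h1.add h2
    rw [hfun, integral_add h12 (integrable_const _), integral_add h1 h2,
      integral_const_mul _ _, integral_const_mul _ _, integral_const]
    simp
    ring
  have h := key_int P hP (fun x => x^2) (measurable_id.pow_const 2) 1
    (fun x hx => by rw [abs_of_nonneg (sq_nonneg x)]; nlinarith [hx.1, hx.2])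
  simp only [S] at h
  rw [haff, haff, haff, moment_one P hP] at h
  have v0 : (((0:Fin 3):ℕ):ℝ) = 0 := by norm_num [show ((0:Fin 3):ℕ) = 0 from rfl]
  have v1 : (((1:Fin 3):ℕ):ℝ) = 1 := by norm_num [show ((1:Fin 3):ℕ) = 1 from rfl]
  have v2 : (((2:Fin 3):ℕ):ℝ) = 2 := by norm_num [show ((2:Fin 3):ℕ) = 2 from rfl]
  rw [v0, v1, v2] at h
  linarith

lemma base_int (P : Measure ℝ) [IsProbabilityMeasure P] (hP : IsTriadicCantor P) (x₀ : ℝ) :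
    ∫ x, (x - x₀)^2 ∂P = 1/9 + (1/2 - x₀)^2 := by
  have hfun : (fun x : ℝ => (x - x₀)^2) = fun x => (x^2 + (-(2*x₀)) * x) + x₀^2 := by
    funext x; ring
  have h1 : Integrable (fun x : ℝ => x^2) P := integrable_xsq P hP
  have h2 : Integrable (fun x : ℝ => (-(2*x₀)) * x) P := (integrable_x P hP).const_mul _
  have h12 : Integrable (fun x : ℝ => x^2 + (-(2*x₀)) * x) P := h1.add h2
  rw [hfun, integral_add h12 (integrable_const _), integral_add h1 h2,
    integral_const_mul _ _, integral_const, moment_one P hP, moment_two P hP]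
  simp
  ring

lemma S_injective (j : Fin 3) : Function.Injective (S j) := by
  intro a b hab
  simp only [S] at hab
  linarith

lemma abs_sub_ge {i j : Fin 3} (hij : i ≠ j) : (1:ℝ) ≤ |((i:ℕ):ℝ) - ((j:ℕ):ℝ)| := by
  have hne : (i:ℕ) ≠ (j:ℕ) := fun hh => hij (Fin.val_injective hh)
  rcases lt_or_gt_of_ne hne with hlt | hlt
  · have h1 : ((i:ℕ):ℝ) + 1 ≤ ((j:ℕ):ℝ) := by exact_mod_cast Nat.succ_le_of_lt hlt
    rw [abs_of_nonpos (by linarith)]; linarith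
  · have h1 : ((j:ℕ):ℝ) + 1 ≤ ((i:ℕ):ℝ) := by exact_mod_cast Nat.succ_le_of_lt hlt
    rw [abs_of_nonneg (by linarith)]; linarith

theorem stmt2 (P : Measure ℝ) [IsProbabilityMeasure P] (hP : IsTriadicCantor P)
    (k : ℕ) (σ : Fin k → Fin 3) (x₀ : ℝ) :
    ∫ x in Jword σ, (x - x₀) ^ 2 ∂P
      = ((3 : ℝ) ^ k)⁻¹ * (((25 : ℝ) ^ k)⁻¹ * (1 / 9) + (Sword σ (1 / 2) - x₀) ^ 2) := by
  have hae := ae_Icc P hP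
  induction k generalizing x₀ with
  | zero =>
    have h1 : Jword σ = Set.Icc 0 1 := by
      rw [Jword, Sword_zero]; simp
    have h2 : ∫ x in Jword σ, (x - x₀) ^ 2 ∂P = ∫ x, (x - x₀) ^ 2 ∂P := by
      rw [h1, Measure.restrict_eq_self_of_ae_mem hae]
    rw [h2, base_int P hP]
    rw [Sword_zero]
    norm_num
  | succ k ih =>
    set τ : Fin k → Fin 3 := fun i => σ i.succ with hτ
    have hcomp : Sword σ = S (σ 0) ∘ Sword τ := Sword_succ σ
    have hJ : Jword σ = S (σ 0) '' Jword τ := by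
      rw [Jword, hcomp, Set.image_comp]; rfl
    set y₀ : ℝ := 5*x₀ - 2*(((σ 0 : Fin 3):ℕ):ℝ) with hy₀
    have hfmeas : Measurable ((Jword σ).indicator fun x => (x - x₀)^2) :=
      ((measurable_id.sub_const x₀).pow_const 2).indicator (measurableSet_Jword σ)
    have hbound : ∀ x ∈ Set.Icc (0:ℝ) 1,
        |(Jword σ).indicator (fun x => (x - x₀)^2) x| ≤ (1 + |x₀|)^2 := by
      intro x hx
      by_cases h : x ∈ Jword σ
      · rw [Set.indicator_of_mem h, abs_of_nonneg (sq_nonneg _)]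
        have h2 : -(1 + |x₀|) ≤ x - x₀ := by linarith [le_abs_self x₀, hx.1]
        have h3 : x - x₀ ≤ 1 + |x₀| := by linarith [neg_abs_le x₀, hx.2]
        exact sq_le_sq' h2 h3
      · rw [Set.indicator_of_notMem h]
        simp [abs_nonneg]
        positivity
    rw [← integral_indicator (measurableSet_Jword σ),
      key_int P hP _ hfmeas ((1 + |x₀|)^2) hbound]
    have hzero : ∀ i : Fin 3, i ≠ σ 0 →
        ∫ x, (Jword σ).indicator (fun x => (x - x₀)^2) (S i x) ∂P = 0 := by
      intro i hij
      refine integral_eq_zero_of_ae (hae.mono fun x hx => ?_)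
      refine Set.indicator_of_notMem ?_ _
      rw [hJ]
      rintro ⟨y, hy, hyx⟩
      have hy' : y ∈ Set.Icc (0:ℝ) 1 := Jword_subset τ hy
      have heq : y - x = 2*(((i:ℕ):ℝ) - (((σ 0 : Fin 3):ℕ):ℝ)) := by
        simp only [S] at hyx
        linarith
      have h1 := abs_sub_ge hij
      rcases abs_cases (((i:ℕ):ℝ) - (((σ 0 : Fin 3):ℕ):ℝ)) with ⟨ha, _⟩ | ⟨ha, _⟩ <;>
        · rw [ha] at h1
          obtain ⟨hx0, hx1⟩ := hx
          obtain ⟨hy0, hy1⟩ := hy'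
          linarith
    have hmain : ∫ x, (Jword σ).indicator (fun x => (x - x₀)^2) (S (σ 0) x) ∂P
        = (1/25) * (((3:ℝ)^k)⁻¹ * (((25:ℝ)^k)⁻¹ * (1/9) + (Sword τ (1/2) - y₀)^2)) := by
      have hpt : (fun x => (Jword σ).indicator (fun x => (x - x₀)^2) (S (σ 0) x))
          = (Jword τ).indicator (fun x => (1/25) * (x - y₀)^2) := by
        funext x
        by_cases hx : x ∈ Jword τ
        · rw [Set.indicator_of_mem hx]
          have hmem : S (σ 0) x ∈ Jword σ := hJ ▸ Set.mem_image_of_mem _ hx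
          rw [Set.indicator_of_mem hmem]
          simp only [S, hy₀]
          ring
        · rw [Set.indicator_of_notMem hx]
          refine Set.indicator_of_notMem ?_ _
          rw [hJ]
          rintro ⟨y, hy, hyx⟩
          exact hx ((S_injective (σ 0) hyx) ▸ hy)
      rw [hpt, integral_indicator (measurableSet_Jword τ), integral_const_mul _ _,
        ih τ y₀]
    have h012 : ∀ m : Fin 3, m = 0 ∨ m = 1 ∨ m = 2 := by decide
    have hSw : Sword σ (1/2) = S (σ 0) (Sword τ (1/2)) := by rw [hcomp]; rfl
    have hrel : Sword σ (1/2) - x₀ = (Sword τ (1/2) - y₀)/5 := by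
      rw [hSw]; simp only [S, hy₀]; ring
    have h3k : (3:ℝ)^k ≠ 0 := by positivity
    have h25k : (25:ℝ)^k ≠ 0 := by positivity
    rcases h012 (σ 0) with h | h | h
    · rw [h] at hmain
      rw [hmain, hzero 1 (by rw [h]; decide), hzero 2 (by rw [h]; decide), hrel,
        pow_succ, pow_succ]
      field_simp
      ring
    · rw [h] at hmain
      rw [hmain, hzero 0 (by rw [h]; decide), hzero 2 (by rw [h]; decide), hrel,
        pow_succ, pow_succ]
      field_simp
      ring
    · rw [h] at hmain
      rw [hmain, hzero 0 (by rw [h]; decide), hzero 1 (by rw [h]; decide), hrel,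
        pow_succ, pow_succ]
      field_simp
      ring
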